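/- Let γ_D = γ_g γ_h γ_f/(3γ_h γ_f + 2γ_f γ_g + γ_g γ_h) where γ_g, γ_h, γ_f are independent exponential random variables with means m_g, m_h, m_f. Then E[ln(1+γ_D)] ≥ ln(1 + exp(-3Φ + ln(m_g m_h m_f) - ln(3 m_h m_f + 2 m_f m_g + m_g m_h))), where Φ is the Euler–Mascheroni constant. -/

import Mathlib

open MeasureTheory ProbabilityTheory Real Set Filter Topology Asymptotics
open scoped ENNReal NNReal

set_option maxHeartbeats 1000000

lemma mellin_exp_one :
    MellinConvergent (fun t : ℝ => Real.log t • ((Real.exp (-t) : ℝ) : ℂ)) 1 ∧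
      HasDerivAt (mellin fun t : ℝ => ((Real.exp (-t) : ℝ) : ℂ))
        (mellin (fun t : ℝ => Real.log t • ((Real.exp (-t) : ℝ) : ℂ)) 1) 1 := by
  refine mellin_hasDerivAt_of_isBigO_rpow (a := 2) (b := 0) ?_ ?_ (by norm_num) ?_ (by norm_num)
  · refine (Continuous.continuousOn ?_).locallyIntegrableOn measurableSet_Ioi
    exact Complex.continuous_ofReal.comp (Real.continuous_exp.comp continuous_neg)
  · rw [← isBigO_norm_left]
    simp_rw [Complex.norm_real, isBigO_norm_left]
    simpa only [neg_one_mul] using (isLittleO_exp_neg_mul_rpow_atTop zero_lt_one _).isBigO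
  · simp_rw [neg_zero, Real.rpow_zero]
    refine isBigO_const_of_tendsto (?_ : Tendsto _ _ (𝓝 (1 : ℂ))) one_ne_zero
    rw [(by simp : (1 : ℂ) = Real.exp (-0))]
    exact (Complex.continuous_ofReal.comp
      (Real.continuous_exp.comp continuous_neg)).continuousWithinAt

lemma h_ofReal : IntegrableOn (fun t : ℝ => ((Real.log t * Real.exp (-t) : ℝ) : ℂ)) (Ioi 0) := by
  have h := mellin_exp_one.1
  unfold MellinConvergent at h
  refine h.congr_fun (fun t ht => ?_) measurableSet_Ioi
  simp [sub_self, Complex.cpow_zero, Complex.real_smul]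

lemma integrableOn_log_mul_exp :
    IntegrableOn (fun t : ℝ => Real.log t * Real.exp (-t)) (Ioi 0) := by
  refine h_ofReal.re.congr (Filter.Eventually.of_forall fun t => ?_)
  show RCLike.re (((Real.log t * Real.exp (-t) : ℝ)) : ℂ) = Real.log t * Real.exp (-t)
  exact Complex.ofReal_re _

lemma integral_log_mul_exp :
    ∫ t in Ioi 0, Real.log t * Real.exp (-t) = -Real.eulerMascheroniConstant := by
  have h1 : HasDerivAt Complex.GammaIntegral
      (∫ t : ℝ in Ioi 0, (t : ℂ) ^ ((1 : ℂ) - 1) * (Real.log t * Real.exp (-t))) 1 :=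
    Complex.hasDerivAt_GammaIntegral (by norm_num)
  have heq : Complex.Gamma =ᶠ[𝓝 (1 : ℂ)] Complex.GammaIntegral := by
    have hmem : {s : ℂ | 0 < s.re} ∈ 𝓝 (1 : ℂ) := by
      refine IsOpen.mem_nhds ?_ (by norm_num)
      exact isOpen_lt continuous_const Complex.continuous_re
    filter_upwards [hmem] with s hs using Complex.Gamma_eq_integral hs
  have h2 : HasDerivAt Complex.Gamma
      (∫ t : ℝ in Ioi 0, (t : ℂ) ^ ((1 : ℂ) - 1) * (Real.log t * Real.exp (-t))) 1 :=
    h1.congr_of_eventuallyEq heq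
  have h3 := h2.real_of_complex
  have h4 : (fun x : ℝ => (Complex.Gamma x).re) = Real.Gamma := by
    funext x; rw [Complex.Gamma_ofReal, Complex.ofReal_re]
  rw [h4] at h3
  have h5 := (Real.hasDerivAt_Gamma_one.unique h3).symm
  have h6 : (∫ t : ℝ in Ioi 0, (t : ℂ) ^ ((1 : ℂ) - 1) * (Real.log t * Real.exp (-t)))
      = (∫ t : ℝ in Ioi 0, ((Real.log t * Real.exp (-t) : ℝ) : ℂ)) := by
    refine setIntegral_congr_fun measurableSet_Ioi (fun t ht => ?_)
    rw [sub_self, Complex.cpow_zero, one_mul, Complex.ofReal_mul]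
  rw [h6] at h5
  have h7 := integral_re h_ofReal
  rw [← h5]
  rw [show ((∫ (t : ℝ) in Ioi 0, ((Real.log t * Real.exp (-t) : ℝ) : ℂ)).re : ℝ)
    = RCLike.re (∫ (t : ℝ) in Ioi 0, ((Real.log t * Real.exp (-t) : ℝ) : ℂ)) from rfl, ← h7]
  refine setIntegral_congr_fun measurableSet_Ioi (fun t ht => ?_)
  show RCLike.re (((Real.log t * Real.exp (-t) : ℝ)) : ℂ) = Real.log t * Real.exp (-t)
  exact Complex.ofReal_re _


lemma expPDFReal_eq (r x : ℝ) :
    exponentialPDFReal r x = if 0 ≤ x then r * rexp (-(r * x)) else 0 := by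
  rw [exponentialPDFReal, gammaPDFReal]
  simp [Real.rpow_one, Real.Gamma_one]

lemma ae_ne_zero : ∀ᵐ x : ℝ, x ≠ 0 := by
  rw [ae_iff]
  simp only [ne_eq, not_not, setOf_eq_eq_singleton]
  exact Real.volume_singleton

lemma expMeasure_withDensity (r : ℝ) :
    expMeasure r = volume.withDensity
      (fun x => ((exponentialPDFReal r x).toNNReal : ℝ≥0∞)) := rfl

lemma exp_pdf_ae_eq {r : ℝ} (hr : 0 ≤ r) (φ : ℝ → ℝ) :
    (fun x => (exponentialPDFReal r x).toNNReal • φ x) =ᵐ[volume]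
      (Ioi 0).indicator (fun x => (r * rexp (-(r * x))) * φ x) := by
  filter_upwards [ae_ne_zero] with x hx
  rcases lt_or_gt_of_ne hx with h | h
  · rw [Set.indicator_of_notMem (by simpa using h.le)]
    rw [expPDFReal_eq, if_neg (not_le.mpr h)]
    simp
  · rw [Set.indicator_of_mem (Set.mem_Ioi.mpr h)]
    rw [expPDFReal_eq, if_pos (le_of_lt h), NNReal.smul_def, smul_eq_mul,
      Real.coe_toNNReal _ (by positivity)]

lemma measurable_exp_pdf_nnreal (r : ℝ) :
    Measurable (fun x => (exponentialPDFReal r x).toNNReal) :=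
  (measurable_exponentialPDFReal r).real_toNNReal

lemma integrable_expMeasure_iff {r : ℝ} (hr : 0 ≤ r) (φ : ℝ → ℝ) :
    Integrable φ (expMeasure r) ↔
      IntegrableOn (fun x => (r * rexp (-(r * x))) * φ x) (Ioi 0) := by
  rw [expMeasure_withDensity,
    integrable_withDensity_iff_integrable_smul (measurable_exp_pdf_nnreal r),
    integrable_congr (exp_pdf_ae_eq hr φ),
    integrable_indicator_iff measurableSet_Ioi]

lemma integral_expMeasure {r : ℝ} (hr : 0 ≤ r) (φ : ℝ → ℝ) :
    ∫ x, φ x ∂(expMeasure r) = ∫ x in Ioi 0, (r * rexp (-(r * x))) * φ x := by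
  rw [expMeasure_withDensity, integral_withDensity_eq_integral_smul
    (measurable_exp_pdf_nnreal r), integral_congr_ae (exp_pdf_ae_eq hr φ),
    integral_indicator measurableSet_Ioi]

lemma expMeasure_Iic {r : ℝ} (hr : 0 < r) : expMeasure r (Iic 0) = 0 := by
  rw [expMeasure_withDensity, withDensity_apply _ measurableSet_Iic]
  have := lintegral_exponentialPDF_eq_antiDeriv hr 0
  simp only [le_refl, if_pos, mul_zero, neg_zero, Real.exp_zero, sub_self,
    ENNReal.ofReal_zero] at this
  convert this using 1
  rfl


-- basic integrability on Ioi 0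
lemma integrableOn_exp_neg_mul {r : ℝ} (hr : 0 < r) :
    IntegrableOn (fun x : ℝ => rexp (-(r * x))) (Ioi 0) := by
  simpa [neg_mul] using exp_neg_integrableOn_Ioi 0 hr

lemma integrableOn_id_mul_exp {r : ℝ} (hr : 0 < r) :
    IntegrableOn (fun x : ℝ => x * rexp (-(r * x))) (Ioi 0) := by
  refine integrable_of_isBigO_exp_neg (half_pos hr) ?_ ?_
  · exact (continuous_id.mul ((continuous_const.mul continuous_id).neg.rexp)).continuousOn
  · rw [Asymptotics.isBigO_iff']
    refine ⟨1, one_pos, ?_⟩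
    have h0 : Tendsto (fun x : ℝ => x ^ (1:ℝ) * rexp (-(r/2) * x)) atTop (𝓝 0) :=
      tendsto_rpow_mul_exp_neg_mul_atTop_nhds_zero 1 (r/2) (half_pos hr)
    have h1 : ∀ᶠ x : ℝ in atTop, x ^ (1:ℝ) * rexp (-(r/2) * x) ≤ 1 :=
      (h0.eventually (eventually_le_nhds one_pos))
    filter_upwards [h1, eventually_ge_atTop (0:ℝ)] with x hx hx0
    have hxr : x ^ (1:ℝ) = x := Real.rpow_one x
    rw [hxr] at hx
    have : x * rexp (-(r * x)) = (x * rexp (-(r/2) * x)) * rexp (-(r/2) * x) := by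
      rw [mul_assoc, ← Real.exp_add]; ring_nf
    rw [Real.norm_eq_abs, Real.norm_eq_abs, abs_of_nonneg (by positivity), this,
      abs_of_nonneg (Real.exp_nonneg _), one_mul]
    exact mul_le_of_le_one_left (Real.exp_nonneg _) hx |>.trans
      (le_of_eq (by ring_nf))

lemma integral_id_expMeasure {m : ℝ} (hm : 0 < m) :
    ∫ x, x ∂(expMeasure (1 / m)) = m := by
  rw [integral_expMeasure (by positivity)]
  have h := integral_rpow_mul_exp_neg_mul_Ioi (a := 2) (r := 1/m) (by norm_num) (by positivity)
  have h2 : ∫ x : ℝ in Ioi 0, x * rexp (-(1/m * x)) = m * m := by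
    rw [show ((2:ℝ) - 1) = 1 by norm_num] at h
    simp only [Real.rpow_one] at h
    rw [h, Real.Gamma_two, mul_one, one_div_one_div,
      show (2:ℝ) = (1:ℝ) + 1 by norm_num, Real.rpow_add hm, Real.rpow_one]
  calc ∫ x : ℝ in Ioi 0, (1/m * rexp (-(1/m * x))) * x
      = (1/m) * ∫ x : ℝ in Ioi 0, x * rexp (-(1/m * x)) := by
        rw [← integral_const_mul]
        exact setIntegral_congr_fun measurableSet_Ioi (fun x hx => by ring)
    _ = m := by rw [h2]; field_simp

lemma integrable_id_expMeasure {m : ℝ} (hm : 0 < m) :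
    Integrable (fun x : ℝ => x) (expMeasure (1 / m)) := by
  rw [integrable_expMeasure_iff (by positivity)]
  have := (integrableOn_id_mul_exp (r := 1/m) (by positivity)).const_mul (1/m)
  exact this.congr (Filter.Eventually.of_forall fun x => by ring)

lemma integrableOn_log_mul_exp_rate {r : ℝ} (hr : 0 < r) :
    IntegrableOn (fun x : ℝ => Real.log x * rexp (-(r * x))) (Ioi 0) := by
  have h1 : IntegrableOn (fun x : ℝ => Real.log (r * x) * rexp (-(r * x))) (Ioi 0) := by
    have := (integrableOn_Ioi_comp_mul_left_iff
      (fun t : ℝ => Real.log t * rexp (-t)) 0 hr).mpr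
    simp only [mul_zero] at this
    exact this integrableOn_log_mul_exp
  have h2 : IntegrableOn (fun x : ℝ => Real.log r * rexp (-(r * x))) (Ioi 0) :=
    (integrableOn_exp_neg_mul hr).const_mul _
  have h3 : IntegrableOn
      (fun x : ℝ => Real.log (r * x) * rexp (-(r * x)) - Real.log r * rexp (-(r * x)))
      (Ioi 0) := h1.sub h2
  refine h3.congr_fun (fun x hx => ?_) measurableSet_Ioi
  dsimp only
  rw [Real.log_mul hr.ne' (ne_of_gt hx)]
  ring

lemma integral_exp_neg_mul_Ioi {r : ℝ} (hr : 0 < r) :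
    ∫ x : ℝ in Ioi 0, rexp (-(r * x)) = 1 / r := by
  have h := integral_rpow_mul_exp_neg_mul_Ioi (a := 1) (r := r) one_pos hr
  simpa [Real.Gamma_one, Real.rpow_one] using h

lemma integral_log_mul_exp_rate {r : ℝ} (hr : 0 < r) :
    ∫ x : ℝ in Ioi 0, Real.log x * rexp (-(r * x))
      = -Real.eulerMascheroniConstant / r - Real.log r / r := by
  have h1 : ∫ x : ℝ in Ioi 0, Real.log (r * x) * rexp (-(r * x))
      = -Real.eulerMascheroniConstant / r := by
    have := integral_comp_mul_left_Ioi (fun t : ℝ => Real.log t * rexp (-t)) 0 hr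
    simp only [mul_zero] at this
    rw [this, integral_log_mul_exp, smul_eq_mul]
    ring
  have h2 : ∫ x : ℝ in Ioi 0, Real.log (r * x) * rexp (-(r * x))
      = (∫ x : ℝ in Ioi 0, Real.log x * rexp (-(r * x))) + Real.log r / r := by
    have hsplit : ∀ x ∈ Ioi (0:ℝ), Real.log (r * x) * rexp (-(r * x))
        = Real.log x * rexp (-(r * x)) + Real.log r * rexp (-(r * x)) := by
      intro x hx
      rw [Real.log_mul hr.ne' (ne_of_gt hx)]
      ring
    rw [setIntegral_congr_fun measurableSet_Ioi hsplit,
      integral_add (integrableOn_log_mul_exp_rate hr)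
        ((integrableOn_exp_neg_mul hr).const_mul _),
      integral_const_mul, integral_exp_neg_mul_Ioi hr]
    ring
  linarith [h1, h2]

lemma integrable_log_expMeasure {m : ℝ} (hm : 0 < m) :
    Integrable Real.log (expMeasure (1 / m)) := by
  rw [integrable_expMeasure_iff (by positivity)]
  have := (integrableOn_log_mul_exp_rate (r := 1/m) (by positivity)).const_mul (1/m)
  exact this.congr (Filter.Eventually.of_forall fun x => by ring)

lemma integral_log_expMeasure {m : ℝ} (hm : 0 < m) :
    ∫ x, Real.log x ∂(expMeasure (1 / m))
      = Real.log m - Real.eulerMascheroniConstant := by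
  rw [integral_expMeasure (by positivity)]
  have hr : 0 < 1/m := by positivity
  calc ∫ x : ℝ in Ioi 0, (1/m * rexp (-(1/m * x))) * Real.log x
      = (1/m) * ∫ x : ℝ in Ioi 0, Real.log x * rexp (-(1/m * x)) := by
        rw [← integral_const_mul]
        exact setIntegral_congr_fun measurableSet_Ioi (fun x hx => by ring)
    _ = Real.log m - Real.eulerMascheroniConstant := by
        rw [integral_log_mul_exp_rate hr, Real.log_div one_ne_zero hm.ne', Real.log_one]
        field_simp
        ring


lemma logexp_tangent (t x : ℝ) :
    Real.log (1 + Real.exp t) + (Real.exp t / (1 + Real.exp t)) * (x - t)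
      ≤ Real.log (1 + Real.exp x) := by
  have h1t : 0 < 1 + Real.exp t := by positivity
  have hs0 : 0 ≤ Real.exp t / (1 + Real.exp t) := by positivity
  have hs1 : 1 - Real.exp t / (1 + Real.exp t) = 1 / (1 + Real.exp t) := by
    field_simp
    ring
  have hkey : Real.exp ((Real.exp t / (1 + Real.exp t)) * (x - t))
      ≤ (1 - Real.exp t / (1 + Real.exp t))
        + (Real.exp t / (1 + Real.exp t)) * Real.exp (x - t) := by
    have h := convexOn_exp.2 (Set.mem_univ (0 : ℝ)) (Set.mem_univ (x - t))
      (show (0:ℝ) ≤ 1 - Real.exp t / (1 + Real.exp t) from by rw [hs1]; positivity)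
      hs0 (by ring)
    simp only [smul_eq_mul, mul_zero, zero_add, Real.exp_zero, mul_one] at h
    exact h
  have h2 : (1 + Real.exp t) * Real.exp ((Real.exp t / (1 + Real.exp t)) * (x - t))
      ≤ 1 + Real.exp x := by
    calc (1 + Real.exp t) * Real.exp ((Real.exp t / (1 + Real.exp t)) * (x - t))
        ≤ (1 + Real.exp t) * ((1 - Real.exp t / (1 + Real.exp t))
            + (Real.exp t / (1 + Real.exp t)) * Real.exp (x - t)) :=
          mul_le_mul_of_nonneg_left hkey h1t.le
      _ = 1 + Real.exp t * Real.exp (x - t) := by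
          field_simp
          ring
      _ = 1 + Real.exp x := by rw [← Real.exp_add]; ring_nf
  have h3 := Real.log_le_log (by positivity) h2
  rw [Real.log_mul h1t.ne' (Real.exp_ne_zero _), Real.log_exp] at h3
  linarith

theorem ergodic_rate_lower_bound {Ω : Type*} [MeasureSpace Ω]
    [IsProbabilityMeasure (ℙ : Measure Ω)]
    (G H F : Ω → ℝ) (mg mh mf : ℝ) (hmg : 0 < mg) (hmh : 0 < mh) (hmf : 0 < mf)
    (hG : Measurable G) (hH : Measurable H) (hF : Measurable F)
    (hGd : Measure.map G ℙ = expMeasure (1 / mg))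
    (hHd : Measure.map H ℙ = expMeasure (1 / mh))
    (hFd : Measure.map F ℙ = expMeasure (1 / mf))
    (hind : iIndepFun
      ![G, H, F] ℙ) :
    ∫ ω, Real.log (1 + G ω * H ω * F ω /
        (3 * H ω * F ω + 2 * F ω * G ω + G ω * H ω)) ∂ℙ ≥
      Real.log (1 + Real.exp (-3 * Real.eulerMascheroniConstant +
        Real.log (mg * mh * mf) - Real.log (3 * mh * mf + 2 * mf * mg + mg * mh))) := by
  -- abbreviations
  set γ := Real.eulerMascheroniConstant with hγ_def
  set c : ℝ := 3 * mh * mf + 2 * mf * mg + mg * mh with hc_def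
  have hc : 0 < c := by rw [hc_def]; positivity
  set t₀ : ℝ := -3 * γ + Real.log (mg * mh * mf) - Real.log c with ht₀_def
  set s₀ : ℝ := Real.exp t₀ / (1 + Real.exp t₀) with hs₀_def
  have hs₀ : 0 ≤ s₀ := by rw [hs₀_def]; positivity
  -- a.e. positivity
  have haePos : ∀ (K : Ω → ℝ) (m : ℝ), 0 < m → Measurable K →
      Measure.map K ℙ = expMeasure (1 / m) → ∀ᵐ ω ∂ℙ, 0 < K ω := by
    intro K m hm hK hKd
    have h0 : ℙ (K ⁻¹' (Iic 0)) = 0 := by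
      rw [← Measure.map_apply hK measurableSet_Iic, hKd, expMeasure_Iic (by positivity)]
    rw [ae_iff]
    simpa only [not_lt] using (show ℙ {a | K a ≤ 0} = 0 from h0)
  have haeG := haePos G mg hmg hG hGd
  have haeH := haePos H mh hmh hH hHd
  have haeF := haePos F mf hmf hF hFd
  -- integrability and expectations of the coordinates
  have hiG : Integrable G ℙ := by
    have := (integrable_map_measure measurable_id.aestronglyMeasurable hG.aemeasurable).mp
      (by rw [hGd]; exact integrable_id_expMeasure hmg)
    exact this
  have hiH : Integrable H ℙ := by
    have := (integrable_map_measure measurable_id.aestronglyMeasurable hH.aemeasurable).mp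
      (by rw [hHd]; exact integrable_id_expMeasure hmh)
    exact this
  have hiF : Integrable F ℙ := by
    have := (integrable_map_measure measurable_id.aestronglyMeasurable hF.aemeasurable).mp
      (by rw [hFd]; exact integrable_id_expMeasure hmf)
    exact this
  have hiLogG : Integrable (fun ω => Real.log (G ω)) ℙ := by
    have := (integrable_map_measure Real.measurable_log.aestronglyMeasurable
      hG.aemeasurable).mp (by rw [hGd]; exact integrable_log_expMeasure hmg)
    exact this
  have hiLogH : Integrable (fun ω => Real.log (H ω)) ℙ := by
    have := (integrable_map_measure Real.measurable_log.aestronglyMeasurable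
      hH.aemeasurable).mp (by rw [hHd]; exact integrable_log_expMeasure hmh)
    exact this
  have hiLogF : Integrable (fun ω => Real.log (F ω)) ℙ := by
    have := (integrable_map_measure Real.measurable_log.aestronglyMeasurable
      hF.aemeasurable).mp (by rw [hFd]; exact integrable_log_expMeasure hmf)
    exact this
  have heG : ∫ ω, G ω ∂ℙ = mg := by
    have h := integral_map (μ := ℙ) (φ := G) (f := fun x : ℝ => x)
      hG.aemeasurable measurable_id.aestronglyMeasurable
    rw [hGd, integral_id_expMeasure hmg] at h
    exact h.symm
  have heH : ∫ ω, H ω ∂ℙ = mh := by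
    have h := integral_map (μ := ℙ) (φ := H) (f := fun x : ℝ => x)
      hH.aemeasurable measurable_id.aestronglyMeasurable
    rw [hHd, integral_id_expMeasure hmh] at h
    exact h.symm
  have heF : ∫ ω, F ω ∂ℙ = mf := by
    have h := integral_map (μ := ℙ) (φ := F) (f := fun x : ℝ => x)
      hF.aemeasurable measurable_id.aestronglyMeasurable
    rw [hFd, integral_id_expMeasure hmf] at h
    exact h.symm
  have heLogG : ∫ ω, Real.log (G ω) ∂ℙ = Real.log mg - γ := by
    have h := integral_map (μ := ℙ) (φ := G) (f := Real.log)
      hG.aemeasurable Real.measurable_log.aestronglyMeasurable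
    rw [hGd, integral_log_expMeasure hmg] at h
    exact h.symm
  have heLogH : ∫ ω, Real.log (H ω) ∂ℙ = Real.log mh - γ := by
    have h := integral_map (μ := ℙ) (φ := H) (f := Real.log)
      hH.aemeasurable Real.measurable_log.aestronglyMeasurable
    rw [hHd, integral_log_expMeasure hmh] at h
    exact h.symm
  have heLogF : ∫ ω, Real.log (F ω) ∂ℙ = Real.log mf - γ := by
    have h := integral_map (μ := ℙ) (φ := F) (f := Real.log)
      hF.aemeasurable Real.measurable_log.aestronglyMeasurable
    rw [hFd, integral_log_expMeasure hmf] at h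
    exact h.symm
  -- independence of pairs
  have hindHF : IndepFun H F ℙ := by
    have := hind.indepFun (show (1 : Fin 3) ≠ 2 by decide)
    simpa using this
  have hindFG : IndepFun F G ℙ := by
    have := hind.indepFun (show (2 : Fin 3) ≠ 0 by decide)
    simpa using this
  have hindGH : IndepFun G H ℙ := by
    have := hind.indepFun (show (0 : Fin 3) ≠ 1 by decide)
    simpa using this
  have hiHF : Integrable (fun ω => H ω * F ω) ℙ := hindHF.integrable_mul hiH hiF
  have hiFG : Integrable (fun ω => F ω * G ω) ℙ := hindFG.integrable_mul hiF hiG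
  have hiGH : Integrable (fun ω => G ω * H ω) ℙ := hindGH.integrable_mul hiG hiH
  have heHF : ∫ ω, H ω * F ω ∂ℙ = mh * mf := by
    have := hindHF.integral_mul_eq_mul_integral hiH.aestronglyMeasurable hiF.aestronglyMeasurable
    rw [show (H * F : Ω → ℝ) = fun ω => H ω * F ω from rfl] at this
    rw [this, heH, heF]
  have heFG : ∫ ω, F ω * G ω ∂ℙ = mf * mg := by
    have := hindFG.integral_mul_eq_mul_integral hiF.aestronglyMeasurable hiG.aestronglyMeasurable
    rw [show (F * G : Ω → ℝ) = fun ω => F ω * G ω from rfl] at this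
    rw [this, heF, heG]
  have heGH : ∫ ω, G ω * H ω ∂ℙ = mg * mh := by
    have := hindGH.integral_mul_eq_mul_integral hiG.aestronglyMeasurable hiH.aestronglyMeasurable
    rw [show (G * H : Ω → ℝ) = fun ω => G ω * H ω from rfl] at this
    rw [this, heG, heH]
  -- the denominator
  have hDmeas : Measurable (fun ω => 3 * H ω * F ω + 2 * F ω * G ω + G ω * H ω) := by
    fun_prop
  have hiHF3 : Integrable (fun ω => 3 * (H ω * F ω)) ℙ := hiHF.const_mul 3
  have hiFG2 : Integrable (fun ω => 2 * (F ω * G ω)) ℙ := hiFG.const_mul 2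
  have hiA : Integrable (fun ω => 3 * (H ω * F ω) + 2 * (F ω * G ω)) ℙ := hiHF3.add hiFG2
  have hiD : Integrable (fun ω => 3 * H ω * F ω + 2 * F ω * G ω + G ω * H ω) ℙ := by
    have h : Integrable (fun ω => (3 * (H ω * F ω) + 2 * (F ω * G ω)) + G ω * H ω) ℙ :=
      hiA.add hiGH
    exact h.congr (Filter.Eventually.of_forall fun ω => by ring)
  have heD : ∫ ω, (3 * H ω * F ω + 2 * F ω * G ω + G ω * H ω) ∂ℙ = c := by
    have h1 : (fun ω => 3 * H ω * F ω + 2 * F ω * G ω + G ω * H ω)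
        = fun ω => (3 * (H ω * F ω) + 2 * (F ω * G ω)) + G ω * H ω :=
      funext fun ω => by ring
    rw [h1, integral_add hiA hiGH, integral_add hiHF3 hiFG2,
      integral_const_mul, integral_const_mul, heHF, heFG, heGH, hc_def]
    ring
  -- integrability of log of the denominator
  have hiLogD : Integrable
      (fun ω => Real.log (3 * H ω * F ω + 2 * F ω * G ω + G ω * H ω)) ℙ := by
    refine Integrable.mono'
      (g := fun ω => Real.log 3 + (G ω + H ω + F ω) + (|Real.log (G ω)| + |Real.log (H ω)|))
      (((integrable_const (Real.log 3)).add ((hiG.add hiH).add hiF)).add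
        (hiLogG.abs.add hiLogH.abs))
      (Real.measurable_log.comp hDmeas).aestronglyMeasurable ?_
    filter_upwards [haeG, haeH, haeF] with ω hg hh hf
    have hD : 0 < 3 * H ω * F ω + 2 * F ω * G ω + G ω * H ω := by
      have := mul_pos hh hf; have := mul_pos hf hg; have := mul_pos hg hh
      nlinarith
    rw [Real.norm_eq_abs, abs_le]
    constructor
    · -- lower bound
      have h1 : Real.log (G ω * H ω)
          ≤ Real.log (3 * H ω * F ω + 2 * F ω * G ω + G ω * H ω) := by
        refine Real.log_le_log (mul_pos hg hh) ?_
        nlinarith [mul_pos hh hf, mul_pos hf hg]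
      rw [Real.log_mul hg.ne' hh.ne'] at h1
      have h3 : (0:ℝ) ≤ Real.log 3 := Real.log_nonneg (by norm_num)
      have := neg_abs_le (Real.log (G ω))
      have := neg_abs_le (Real.log (H ω))
      linarith
    · -- upper bound
      have h2 : Real.log (3 * H ω * F ω + 2 * F ω * G ω + G ω * H ω)
          ≤ Real.log (3 * ((1 + G ω) * ((1 + H ω) * (1 + F ω)))) := by
        refine Real.log_le_log hD ?_
        nlinarith [mul_pos hg hh, mul_pos hh hf, mul_pos hf hg,
          mul_pos (mul_pos hg hh) hf]
      rw [Real.log_mul (by norm_num) (by positivity),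
        Real.log_mul (by positivity) (by positivity),
        Real.log_mul (by positivity) (by positivity)] at h2
      have e1 : Real.log (1 + G ω) ≤ G ω := by
        have := Real.log_le_sub_one_of_pos (show (0:ℝ) < 1 + G ω by linarith)
        linarith
      have e2 : Real.log (1 + H ω) ≤ H ω := by
        have := Real.log_le_sub_one_of_pos (show (0:ℝ) < 1 + H ω by linarith)
        linarith
      have e3 : Real.log (1 + F ω) ≤ F ω := by
        have := Real.log_le_sub_one_of_pos (show (0:ℝ) < 1 + F ω by linarith)
        linarith
      have := abs_nonneg (Real.log (G ω))
      have := abs_nonneg (Real.log (H ω))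
      linarith
  -- integrability of the target integrand
  have hiL : Integrable (fun ω => Real.log (1 + G ω * H ω * F ω /
      (3 * H ω * F ω + 2 * F ω * G ω + G ω * H ω))) ℙ := by
    refine Integrable.mono' hiF ?_ ?_
    · exact (Real.measurable_log.comp
        (measurable_const.add ((hG.mul hH |>.mul hF).div hDmeas))).aestronglyMeasurable
    filter_upwards [haeG, haeH, haeF] with ω hg hh hf
    have hD : 0 < 3 * H ω * F ω + 2 * F ω * G ω + G ω * H ω := by
      nlinarith [mul_pos hh hf, mul_pos hf hg, mul_pos hg hh]
    have hq : 0 ≤ G ω * H ω * F ω / (3 * H ω * F ω + 2 * F ω * G ω + G ω * H ω) := by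
      positivity
    have hq2 : G ω * H ω * F ω / (3 * H ω * F ω + 2 * F ω * G ω + G ω * H ω) ≤ F ω := by
      rw [div_le_iff₀ hD]
      nlinarith [mul_pos hh hf, mul_pos hf hg, sq_nonneg (F ω)]
    have hlogpos : 0 ≤ Real.log (1 + G ω * H ω * F ω /
        (3 * H ω * F ω + 2 * F ω * G ω + G ω * H ω)) :=
      Real.log_nonneg (by linarith)
    rw [Real.norm_eq_abs, abs_of_nonneg hlogpos]
    have := Real.log_le_sub_one_of_pos (show (0:ℝ) < 1 + G ω * H ω * F ω /
        (3 * H ω * F ω + 2 * F ω * G ω + G ω * H ω) by linarith)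
    linarith
  -- X and its integral
  have hiX : Integrable (fun ω => Real.log (G ω) + Real.log (H ω) + Real.log (F ω)
      - Real.log (3 * H ω * F ω + 2 * F ω * G ω + G ω * H ω)) ℙ :=
    ((hiLogG.add hiLogH).add hiLogF).sub hiLogD
  -- bound on E log D
  have hlogD_le : ∫ ω, Real.log (3 * H ω * F ω + 2 * F ω * G ω + G ω * H ω) ∂ℙ
      ≤ Real.log c := by
    have hpt : ∀ᵐ ω ∂ℙ, Real.log (3 * H ω * F ω + 2 * F ω * G ω + G ω * H ω)
        ≤ Real.log c + ((3 * H ω * F ω + 2 * F ω * G ω + G ω * H ω) / c - 1) := by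
      filter_upwards [haeG, haeH, haeF] with ω hg hh hf
      have hD : 0 < 3 * H ω * F ω + 2 * F ω * G ω + G ω * H ω := by
        nlinarith [mul_pos hh hf, mul_pos hf hg, mul_pos hg hh]
      have h := Real.log_le_sub_one_of_pos (show (0:ℝ) <
        (3 * H ω * F ω + 2 * F ω * G ω + G ω * H ω) / c by positivity)
      rw [Real.log_div hD.ne' hc.ne'] at h
      linarith
    have hiDc : Integrable
        (fun ω => (3 * H ω * F ω + 2 * F ω * G ω + G ω * H ω) / c - 1) ℙ :=
      (hiD.div_const c).sub (integrable_const 1)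
    have hiRHS : Integrable (fun ω => Real.log c +
        ((3 * H ω * F ω + 2 * F ω * G ω + G ω * H ω) / c - 1)) ℙ :=
      (integrable_const _).add hiDc
    have hint := integral_mono_ae hiLogD hiRHS hpt
    rw [integral_add (integrable_const _) hiDc,
      integral_sub (hiD.div_const c) (integrable_const 1), integral_div, heD,
      integral_const, integral_const, probReal_univ] at hint
    simpa [div_self hc.ne'] using hint
  -- E X ≥ t₀
  have heX_ge : t₀ ≤ ∫ ω, (Real.log (G ω) + Real.log (H ω) + Real.log (F ω)
      - Real.log (3 * H ω * F ω + 2 * F ω * G ω + G ω * H ω)) ∂ℙ := by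
    have hiLogGH : Integrable (fun ω => Real.log (G ω) + Real.log (H ω)) ℙ :=
      hiLogG.add hiLogH
    have hiLogSum : Integrable
        (fun ω => Real.log (G ω) + Real.log (H ω) + Real.log (F ω)) ℙ :=
      hiLogGH.add hiLogF
    rw [integral_sub hiLogSum hiLogD,
      integral_add hiLogGH hiLogF, integral_add hiLogG hiLogH,
      heLogG, heLogH, heLogF]
    rw [ht₀_def, Real.log_mul (by positivity) hmf.ne', Real.log_mul hmg.ne' hmh.ne']
    linarith
  -- pointwise tangent bound
  have haeMain : ∀ᵐ ω ∂ℙ, Real.log (1 + Real.exp t₀)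
      + s₀ * ((Real.log (G ω) + Real.log (H ω) + Real.log (F ω)
        - Real.log (3 * H ω * F ω + 2 * F ω * G ω + G ω * H ω)) - t₀)
      ≤ Real.log (1 + G ω * H ω * F ω /
        (3 * H ω * F ω + 2 * F ω * G ω + G ω * H ω)) := by
    filter_upwards [haeG, haeH, haeF] with ω hg hh hf
    have hD : 0 < 3 * H ω * F ω + 2 * F ω * G ω + G ω * H ω := by
      nlinarith [mul_pos hh hf, mul_pos hf hg, mul_pos hg hh]
    have hXexp : Real.exp (Real.log (G ω) + Real.log (H ω) + Real.log (F ω)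
        - Real.log (3 * H ω * F ω + 2 * F ω * G ω + G ω * H ω))
        = G ω * H ω * F ω / (3 * H ω * F ω + 2 * F ω * G ω + G ω * H ω) := by
      rw [Real.exp_sub, Real.exp_add, Real.exp_add, Real.exp_log hg, Real.exp_log hh,
        Real.exp_log hf, Real.exp_log hD]
    have := logexp_tangent t₀ (Real.log (G ω) + Real.log (H ω) + Real.log (F ω)
      - Real.log (3 * H ω * F ω + 2 * F ω * G ω + G ω * H ω))
    rw [hXexp] at this
    exact this
  -- integrate
  have hiXt : Integrable (fun ω => (Real.log (G ω) + Real.log (H ω) + Real.log (F ω)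
      - Real.log (3 * H ω * F ω + 2 * F ω * G ω + G ω * H ω)) - t₀) ℙ :=
    hiX.sub (integrable_const t₀)
  have hiXt' : Integrable (fun ω => s₀ * ((Real.log (G ω) + Real.log (H ω) + Real.log (F ω)
      - Real.log (3 * H ω * F ω + 2 * F ω * G ω + G ω * H ω)) - t₀)) ℙ :=
    hiXt.const_mul s₀
  have hiTan : Integrable (fun ω => Real.log (1 + Real.exp t₀)
      + s₀ * ((Real.log (G ω) + Real.log (H ω) + Real.log (F ω)
        - Real.log (3 * H ω * F ω + 2 * F ω * G ω + G ω * H ω)) - t₀)) ℙ :=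
    (integrable_const _).add hiXt'
  have hint := integral_mono_ae hiTan hiL haeMain
  rw [integral_add (integrable_const _) hiXt',
    integral_const_mul, integral_sub hiX (integrable_const t₀), integral_const,
    integral_const, probReal_univ] at hint
  simp only [ENNReal.toReal_one, one_smul, smul_eq_mul, one_mul] at hint
  have hfinal : Real.log (1 + Real.exp t₀) ≤ Real.log (1 + Real.exp t₀)
      + s₀ * ((∫ ω, (Real.log (G ω) + Real.log (H ω) + Real.log (F ω)
        - Real.log (3 * H ω * F ω + 2 * F ω * G ω + G ω * H ω)) ∂ℙ) - t₀) := by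
    nlinarith [mul_nonneg hs₀ (sub_nonneg.mpr heX_ge)]
  rw [ge_iff_le, ht₀_def] at *
  exact le_trans hfinal hint
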